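/- Let G be a graph of the tetrahedral model with no proper face of length 2, containing two bubbles connected by two color-0 edges in the configuration forced by the absence of proper length-2 faces, with the remaining four vertices connected to other bubbles by distinct color-0 edges not forming 2-edge-cuts. Then there is a sequence of two flips producing a connected graph G'' with F(G'') > F(G) and b(G'') = b(G); hence G does not maximize the number of faces. -/

import Mathlib

/-!  A combinatorial model of the Feynman graphs of the rank-3 tetrahedral
(`O(N)^3`) tensor model.

A graph consists of a finite set `B` of bubbles (copies of the tetrahedron
`K_4`); each bubble has four vertices, so the vertex set is `B × Fin 4`.
Inside every bubble the edges of colors `1,2,3` are given once and for all by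
the three fixed-point-free involutions of `Fin 4` (the proper 3-edge-coloring
of `K_4`).  The color-0 propagator edges, one per vertex, are encoded by a
fixed-point-free involution `pairing` of the vertex set. -/

open Equiv

/-- The color-`c` (for `c ∈ {1,2,3}`, here `c : Fin 3`) perfect matching on the
four vertices of a tetrahedral bubble. -/
def bubblePerm : Fin 3 → Equiv.Perm (Fin 4) :=
  ![Equiv.swap 0 1 * Equiv.swap 2 3,
    Equiv.swap 0 2 * Equiv.swap 1 3,
    Equiv.swap 0 3 * Equiv.swap 1 2]

/-- A Feynman graph of the tetrahedral tensor model: a finite set of `K_4`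
bubbles together with a fixed-point-free involution of the vertex set
describing the color-0 edges. -/
structure TGraph where
  B : Type
  [fintypeB : Fintype B]
  [decB : DecidableEq B]
  pairing : Equiv.Perm (B × Fin 4)
  invol : ∀ v, pairing (pairing v) = v
  fixfree : ∀ v, pairing v ≠ v

attribute [instance] TGraph.fintypeB TGraph.decB

namespace TGraph

/-- The vertex set of a graph. -/
abbrev V (G : TGraph) : Type := G.B × Fin 4

/-- The permutation of the vertices given by the color-`c` edges inside the
bubbles. -/
def colPerm (G : TGraph) (c : Fin 3) : Equiv.Perm G.V :=
  (Equiv.refl G.B).prodCongr (bubblePerm c)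

/-- The number of bubbles of a graph. -/
def b (G : TGraph) : ℕ := Fintype.card G.B

/-- The subgroup of permutations of the vertices generated by the color-0
pairing and the color-`c` matching: its orbits are exactly the faces of
color `c` (cycles alternating colors `0` and `c`). -/
def faceGroup (G : TGraph) (c : Fin 3) : Subgroup (Equiv.Perm G.V) :=
  Subgroup.closure {G.pairing, G.colPerm c}

/-- Two vertices lie on the same face of color `c`. -/
def sameFace (G : TGraph) (c : Fin 3) (u v : G.V) : Prop :=
  u ∈ MulAction.orbit (G.faceGroup c) v

/-- The number of faces of color `c` of the graph. -/
noncomputable def numFaces (G : TGraph) (c : Fin 3) : ℕ :=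
  Nat.card (MulAction.orbitRel.Quotient (G.faceGroup c) G.V)

/-- The total number of faces of the graph. -/
noncomputable def F (G : TGraph) : ℕ := ∑ c : Fin 3, G.numFaces c

/-- The length of the face of color `c` through the vertex `v` (a face of
length `n` consists of `n` color-0 edges and `n` color-`c` edges, hence `2n`
vertices). -/
noncomputable def faceLength (G : TGraph) (c : Fin 3) (v : G.V) : ℕ :=
  Nat.card (MulAction.orbit (G.faceGroup c) v) / 2

/-- The subgroup generated by all edges of the graph. -/
def fullGroup (G : TGraph) : Subgroup (Equiv.Perm G.V) :=
  Subgroup.closure ({G.pairing} ∪ Set.range G.colPerm)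

/-- A graph is connected if any vertex can be reached from any other one along
its edges. -/
def Connected (G : TGraph) : Prop :=
  ∀ u v : G.V, u ∈ MulAction.orbit G.fullGroup v

/-- One step along an edge of the graph avoiding the color-0 edges whose
endpoints belong to `S`. -/
def stepAvoiding (G : TGraph) (S : Set G.V) (u v : G.V) : Prop :=
  (∃ c, v = G.colPerm c u) ∨ (v = G.pairing u ∧ u ∉ S ∧ v ∉ S)

/-- Reachability in the graph with the color-0 edges meeting `S` removed. -/
def reachAvoiding (G : TGraph) (S : Set G.V) : G.V → G.V → Prop :=
  Relation.ReflTransGen (G.stepAvoiding S)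

/-- The pair of color-0 edges through the vertices `u` and `w` disconnects the
graph when removed.  Together with the requirement that the two edges be
distinct, this is the notion of a 2-edge-cut of color-0 edges. -/
def CutDisconnects (G : TGraph) (u w : G.V) : Prop :=
  ¬ ∀ x y : G.V, G.reachAvoiding {u, G.pairing u, w, G.pairing w} x y

/-- Two vertices are connected by a 2-point function if they are joined by a
color-0 edge, or if their two (distinct) color-0 edges form a 2-edge-cut. -/
def TwoPoint (G : TGraph) (x y : G.V) : Prop :=
  G.pairing x = y ∨ (y ≠ x ∧ y ≠ G.pairing x ∧ G.CutDisconnects x y)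

/-- The flip of the two color-0 edges `{u, pairing u}` and `{w, pairing w}`
(assumed distinct) which reconnects `u` with `w` (and `pairing u` with
`pairing w`): the pairing is conjugated by the transposition exchanging
`pairing u` and `w`.  The other flip of this pair of edges is
`G.flip u (G.pairing w)`. -/
def flip (G : TGraph) (u w : G.V) : TGraph where
  B := G.B
  pairing := Equiv.swap (G.pairing u) w * G.pairing * Equiv.swap (G.pairing u) w
  invol := by
    intro v
    simp only [Equiv.Perm.mul_apply, Equiv.swap_apply_self, G.invol]
  fixfree := by
    intro v h
    simp only [Equiv.Perm.mul_apply] at h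
    have h' : G.pairing (Equiv.swap (G.pairing u) w v) = Equiv.swap (G.pairing u) w v := by
      have := congrArg (Equiv.swap (G.pairing u) w) h
      simpa using this
    exact G.fixfree _ h'

/-- The face of color `c` through the color-0 edge `{v, pairing v}` has
length 2 (it consists of this edge, a color-`c` edge, a second color-0 edge
and a second color-`c` edge closing the cycle). -/
def FaceLen2 (G : TGraph) (c : Fin 3) (v : G.V) : Prop :=
  G.pairing v ≠ G.colPerm c v ∧
    G.pairing (G.colPerm c (G.pairing v)) = G.colPerm c v

/-- A proper face of length 2 of color `c` through `v`: a face of length 2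
whose two color-0 edges connect two distinct bubbles. -/
def ProperFace2 (G : TGraph) (c : Fin 3) (v : G.V) : Prop :=
  G.FaceLen2 c v ∧ (G.pairing v).1 ≠ v.1

/-- A graph maximizes the number of faces if it is connected and no connected
graph with the same number of bubbles has more faces. -/
def MaximizesFaces (G : TGraph) : Prop :=
  G.Connected ∧ ∀ H : TGraph, H.Connected → H.b = G.b → H.F ≤ G.F

/-- Isomorphisms of graphs: bijections of the vertex sets commuting with the
color-0 pairing and with the colored matchings inside the bubbles. -/
structure Iso (G H : TGraph) where
  toEquiv : G.V ≃ H.V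
  map_pairing : ∀ v, toEquiv (G.pairing v) = H.pairing (toEquiv v)
  map_col : ∀ c v, toEquiv (G.colPerm c v) = H.colPerm c (toEquiv v)

/-- Two graphs are isomorphic. -/
def IsIso (G H : TGraph) : Prop := Nonempty (Iso G H)

end TGraph

open TGraph

/-- The leading-order two-bubble graph `G_2`: two tetrahedral bubbles with
corresponding vertices joined by four color-0 edges, so that all six faces
have length 2. -/
def G2 : TGraph where
  B := Fin 2
  pairing := (Equiv.swap (0 : Fin 2) 1).prodCongr (Equiv.refl (Fin 4))
  invol := by
    rintro ⟨i, k⟩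
    simp [Equiv.prodCongr_apply, Equiv.swap_apply_self]
  fixfree := by
    rintro ⟨i, k⟩ h
    have hi : Equiv.swap (0 : Fin 2) 1 i = i := congrArg Prod.fst h
    fin_cases i <;> simp_all

/-- The double tadpole `G_1^{(c)}`: one tetrahedral bubble whose two color-0
edges each join two vertices already adjacent by an edge of color `c`. -/
def G1 (c : Fin 3) : TGraph where
  B := Fin 1
  pairing := (Equiv.refl (Fin 1)).prodCongr (bubblePerm c)
  invol := by
    rintro ⟨i, k⟩
    have hk : ∀ j : Fin 4, bubblePerm c (bubblePerm c j) = j := by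
      fin_cases c <;> decide
    simp [Equiv.prodCongr_apply, hk]
  fixfree := by
    rintro ⟨i, k⟩ h
    have hk : bubblePerm c k = k := congrArg Prod.snd h
    have hne : ∀ j : Fin 4, bubblePerm c j ≠ j := by
      fin_cases c <;> decide
    exact hne k hk

namespace TGraph

variable (H K : TGraph)

/-- The image of a vertex of `H` in the glued graph. -/
def inlV (x : H.V) : (H.B ⊕ K.B) × Fin 4 := (Sum.inl x.1, x.2)

/-- The image of a vertex of `K` in the glued graph. -/
def inrV (y : K.V) : (H.B ⊕ K.B) × Fin 4 := (Sum.inr y.1, y.2)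

/-- The underlying function of the pairing of the graph obtained by gluing `H`
and `K` along the color-0 edges `{p, H.pairing p}` and `{q, K.pairing q}`:
these two edges are cut and the half-edges are reglued as `p — q` and
`H.pairing p — K.pairing q`.  The new pair of edges is a 2-edge-cut of the
resulting graph when `H` and `K` are connected. -/
def glueFun (p : H.V) (q : K.V) : (H.B ⊕ K.B) × Fin 4 → (H.B ⊕ K.B) × Fin 4 :=
  fun z =>
    match z with
    | (Sum.inl u, k) =>
        if (u, k) = p then inrV H K q
        else if (u, k) = H.pairing p then inrV H K (K.pairing q)
        else inlV H K (H.pairing (u, k))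
    | (Sum.inr u, k) =>
        if (u, k) = q then inlV H K p
        else if (u, k) = K.pairing q then inlV H K (H.pairing p)
        else inrV H K (K.pairing (u, k))

theorem glueFun_inlV (p : H.V) (q : K.V) (x : H.V) :
    glueFun H K p q (inlV H K x) =
      if x = p then inrV H K q
      else if x = H.pairing p then inrV H K (K.pairing q)
      else inlV H K (H.pairing x) := by
  cases x
  rfl

theorem glueFun_inrV (p : H.V) (q : K.V) (y : K.V) :
    glueFun H K p q (inrV H K y) =
      if y = q then inlV H K p
      else if y = K.pairing q then inlV H K (H.pairing p)
      else inrV H K (K.pairing y) := by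
  cases y
  rfl

theorem inlV_injective : Function.Injective (inlV H K) := by
  rintro ⟨u, k⟩ ⟨u', k'⟩ h
  have h1 : (Sum.inl u : H.B ⊕ K.B) = Sum.inl u' := congrArg Prod.fst h
  have h2 : k = k' := congrArg Prod.snd h
  exact Prod.ext (Sum.inl_injective h1) h2

theorem inrV_injective : Function.Injective (inrV H K) := by
  rintro ⟨u, k⟩ ⟨u', k'⟩ h
  have h1 : (Sum.inr u : H.B ⊕ K.B) = Sum.inr u' := congrArg Prod.fst h
  have h2 : k = k' := congrArg Prod.snd h
  exact Prod.ext (Sum.inr_injective h1) h2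

theorem inlV_ne_inrV (x : H.V) (y : K.V) : inlV H K x ≠ inrV H K y := by
  intro h
  exact Sum.inl_ne_inr (congrArg Prod.fst h)

theorem glueFun_invol_inl (p : H.V) (q : K.V) (x : H.V) :
    glueFun H K p q (glueFun H K p q (inlV H K x)) = inlV H K x := by
  rw [glueFun_inlV]
  by_cases h1 : x = p
  · rw [if_pos h1, glueFun_inrV, if_pos rfl, h1]
  · by_cases h2 : x = H.pairing p
    · rw [if_neg h1, if_pos h2, glueFun_inrV,
        if_neg (fun h => K.fixfree q h), if_pos rfl, h2]
    · have hne1 : H.pairing x ≠ p := by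
        intro h; apply h2
        have := congrArg H.pairing h
        rw [H.invol] at this; exact this
      have hne2 : H.pairing x ≠ H.pairing p := fun h => h1 (H.pairing.injective h)
      rw [if_neg h1, if_neg h2, glueFun_inlV, if_neg hne1, if_neg hne2, H.invol]

theorem glueFun_invol_inr (p : H.V) (q : K.V) (y : K.V) :
    glueFun H K p q (glueFun H K p q (inrV H K y)) = inrV H K y := by
  rw [glueFun_inrV]
  by_cases h1 : y = q
  · rw [if_pos h1, glueFun_inlV, if_pos rfl, h1]
  · by_cases h2 : y = K.pairing q
    · rw [if_neg h1, if_pos h2, glueFun_inlV,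
        if_neg (fun h => H.fixfree p h), if_pos rfl, h2]
    · have hne1 : K.pairing y ≠ q := by
        intro h; apply h2
        have := congrArg K.pairing h
        rw [K.invol] at this; exact this
      have hne2 : K.pairing y ≠ K.pairing q := fun h => h1 (K.pairing.injective h)
      rw [if_neg h1, if_neg h2, glueFun_inrV, if_neg hne1, if_neg hne2, K.invol]

theorem glueFun_involutive (p : H.V) (q : K.V) :
    Function.Involutive (glueFun H K p q) := by
  rintro ⟨(u | u), k⟩
  · exact glueFun_invol_inl H K p q (u, k)
  · exact glueFun_invol_inr H K p q (u, k)

theorem glueFun_fixfree (p : H.V) (q : K.V) :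
    ∀ z, glueFun H K p q z ≠ z := by
  have hl : ∀ x : H.V, glueFun H K p q (inlV H K x) ≠ inlV H K x := by
    intro x h
    rw [glueFun_inlV] at h
    by_cases h1 : x = p
    · rw [if_pos h1] at h
      exact inlV_ne_inrV H K x q h.symm
    · by_cases h2 : x = H.pairing p
      · rw [if_neg h1, if_pos h2] at h
        exact inlV_ne_inrV H K x (K.pairing q) h.symm
      · rw [if_neg h1, if_neg h2] at h
        exact H.fixfree x (inlV_injective H K h)
  have hr : ∀ y : K.V, glueFun H K p q (inrV H K y) ≠ inrV H K y := by
    intro y h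
    rw [glueFun_inrV] at h
    by_cases h1 : y = q
    · rw [if_pos h1] at h
      exact inlV_ne_inrV H K p y h
    · by_cases h2 : y = K.pairing q
      · rw [if_neg h1, if_pos h2] at h
        exact inlV_ne_inrV H K (H.pairing p) y h
      · rw [if_neg h1, if_neg h2] at h
        exact K.fixfree y (inrV_injective H K h)
  rintro ⟨(u | u), k⟩
  · exact hl (u, k)
  · exact hr (u, k)

/-- Gluing two graphs along a pair of color-0 edges.  When `H` and `K` are
connected, the two new color-0 edges form a 2-edge-cut of the glued graph, and
conversely every connected graph with a color-0 2-edge-cut arises this way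
from the two closed graphs obtained by cutting the two edges and closing each
side. -/
def glue (p : H.V) (q : K.V) : TGraph where
  B := H.B ⊕ K.B
  pairing := (glueFun_involutive H K p q).toPerm
  invol := fun v => glueFun_involutive H K p q v
  fixfree := fun v => glueFun_fixfree H K p q v

/-- Insertion of a melonic dipole (the 2-point graph obtained by cutting one
color-0 edge of `G_2`) on the color-0 edge `{v, G.pairing v}` of `G`. -/
def insertDipole (G : TGraph) (v : G.V) : TGraph :=
  glue G G2 v ((0 : Fin 2), (0 : Fin 4))

end TGraph

open TGraph

/-- Melonic graphs (up to isomorphism): `G_2` is melonic, and inserting a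
melonic dipole on any color-0 edge of a melonic graph yields a melonic
graph. -/
inductive IsMelonic : TGraph → Prop
  | base {G : TGraph} (h : IsIso G G2) : IsMelonic G
  | insert {G : TGraph} (hG : IsMelonic G) (v : G.V) {H : TGraph}
      (h : IsIso H (G.insertDipole v)) : IsMelonic H

/-- Double tadpoles decorated with melonic 2-point functions (up to
isomorphism): these are exactly the graphs obtained from one of the double
tadpoles `G_1^{(c)}` by repeatedly inserting melonic dipoles on color-0 edges,
i.e. double tadpoles whose two color-0 edges are replaced by melonic 2-point
functions. -/
inductive IsDecoratedTadpole : TGraph → Prop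
  | base {G : TGraph} (c : Fin 3) (h : IsIso G (G1 c)) : IsDecoratedTadpole G
  | insert {G : TGraph} (hG : IsDecoratedTadpole G) (v : G.V) {H : TGraph}
      (h : IsIso H (G.insertDipole v)) : IsDecoratedTadpole H

namespace Flip15

open Relation MulAction

section CardQuot

variable {α : Type*} [Finite α]

/-- Comparing numbers of classes when one relation refines another. -/
lemma card_quotient_le {s t : Setoid α} (h : ∀ x y, s.r x y → t.r x y) :
    Nat.card (Quotient t) ≤ Nat.card (Quotient s) := by
  have hs : Function.Surjective (Quotient.map' (id : α → α) h :
      Quotient s → Quotient t) := by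
    intro q
    obtain ⟨x, rfl⟩ := Quotient.exists_rep q
    exact ⟨Quotient.mk'' x, rfl⟩
  exact Nat.card_le_card_of_surjective _ hs

lemma card_quotient_succ_le {s t : Setoid α} (h : ∀ x y, s.r x y → t.r x y)
    (a b : α) (hs : ¬ s.r a b) (ht : t.r a b) :
    Nat.card (Quotient t) + 1 ≤ Nat.card (Quotient s) := by
  set f : Quotient s → Quotient t := Quotient.map' (id : α → α) h with hf
  have hsurj : Function.Surjective f := by
    intro q
    obtain ⟨x, rfl⟩ := Quotient.exists_rep q
    exact ⟨Quotient.mk'' x, rfl⟩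
  have hle : Nat.card (Quotient t) ≤ Nat.card (Quotient s) :=
    Nat.card_le_card_of_surjective _ hsurj
  rcases eq_or_lt_of_le hle with heq | hlt
  · exfalso
    have hbij : Function.Bijective f :=
      hsurj.bijective_of_nat_card_le (le_of_eq heq.symm)
    have h1 : f (Quotient.mk'' a) = f (Quotient.mk'' b) := by
      simp only [hf, Quotient.map'_mk'']
      exact Quotient.sound' ht
    have h2 : (Quotient.mk'' a : Quotient s) = Quotient.mk'' b := hbij.injective h1
    exact hs (Quotient.exact' h2)
  · omega

/-- Adding one extra pair to an equivalence relation decreases the number of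
classes by at most one. -/
lemma card_quotient_le_succ {s t : Setoid α} (x0 y0 : α)
    (hst : ∀ x y, s.r x y → t.r x y)
    (ht : ∀ x y, t.r x y →
      s.r x y ∨ ((s.r x x0 ∨ s.r x y0) ∧ (s.r y x0 ∨ s.r y y0))) :
    Nat.card (Quotient s) ≤ Nat.card (Quotient t) + 1 := by
  classical
  have hdec : ∀ x y : α, s.r x y → ((if s.r x x0 then (Sum.inr () : Quotient t ⊕ Unit)
      else Sum.inl (Quotient.mk'' x)) =
      (if s.r y x0 then Sum.inr () else Sum.inl (Quotient.mk'' y))) := by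
    intro x y hxy
    by_cases hx : s.r x x0
    · rw [if_pos hx, if_pos (s.trans' (s.symm' hxy) hx)]
    · have hy : ¬ s.r y x0 := fun hy => hx (s.trans' hxy hy)
      rw [if_neg hx, if_neg hy]
      exact congrArg Sum.inl (Quotient.sound' (hst _ _ hxy))
  set f : Quotient s → Quotient t ⊕ Unit :=
    Quotient.lift (fun x => if s.r x x0 then (Sum.inr () : Quotient t ⊕ Unit)
      else Sum.inl (Quotient.mk'' x)) (fun x y h => hdec x y h) with hf
  have hinj : Function.Injective f := by
    intro q1 q2 hq
    obtain ⟨x, rfl⟩ := Quotient.exists_rep q1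
    obtain ⟨y, rfl⟩ := Quotient.exists_rep q2
    simp only [hf, Quotient.lift_mk] at hq
    by_cases hx : s.r x x0 <;> by_cases hy : s.r y x0
    · exact Quotient.sound' (s.trans' hx (s.symm' hy))
    · rw [if_pos hx, if_neg hy] at hq; exact absurd hq (by simp)
    · rw [if_neg hx, if_pos hy] at hq; exact absurd hq (by simp)
    · rw [if_neg hx, if_neg hy] at hq
      have hxy : t.r x y := Quotient.exact' (Sum.inl.inj hq)
      rcases ht x y hxy with h | ⟨hx', hy'⟩
      · exact Quotient.sound' h
      · have hx2 : s.r x y0 := hx'.resolve_left hx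
        have hy2 : s.r y y0 := hy'.resolve_left hy
        exact Quotient.sound' (s.trans' hx2 (s.symm' hy2))
  calc Nat.card (Quotient s) ≤ Nat.card (Quotient t ⊕ Unit) :=
        Nat.card_le_card_of_injective f hinj
    _ = Nat.card (Quotient t) + 1 := by simp [Nat.card_sum]

end CardQuot

end Flip15
namespace Flip15

open Relation MulAction TGraph

section Graph

variable (G : TGraph)

lemma bubblePerm_invol (c : Fin 3) (k : Fin 4) : bubblePerm c (bubblePerm c k) = k := by
  fin_cases c <;> fin_cases k <;> decide

lemma bubblePerm_ne (c : Fin 3) (k : Fin 4) : bubblePerm c k ≠ k := by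
  fin_cases c <;> fin_cases k <;> decide

lemma colPerm_apply (c : Fin 3) (x : G.V) : G.colPerm c x = (x.1, bubblePerm c x.2) := rfl

lemma colPerm_fst (c : Fin 3) (x : G.V) : (G.colPerm c x).1 = x.1 := rfl

lemma colPerm_invol (c : Fin 3) (x : G.V) : G.colPerm c (G.colPerm c x) = x := by
  rw [colPerm_apply, colPerm_apply, bubblePerm_invol]

lemma colPerm_ne (c : Fin 3) (x : G.V) : G.colPerm c x ≠ x := fun h =>
  bubblePerm_ne c x.2 (congrArg Prod.snd h)

/-- One step along a face of color `c`. -/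
def fstep (G : TGraph) (c : Fin 3) (x y : G.V) : Prop :=
  y = G.pairing x ∨ y = G.colPerm c x

lemma fstep_symm (c : Fin 3) : Symmetric (fstep G c) := by
  rintro x y (rfl | rfl)
  · left; rw [G.invol]
  · right; rw [colPerm_invol]

lemma pairing_mem_faceGroup (c : Fin 3) : G.pairing ∈ G.faceGroup c :=
  Subgroup.subset_closure (Or.inl rfl)

lemma colPerm_mem_faceGroup (c : Fin 3) : G.colPerm c ∈ G.faceGroup c :=
  Subgroup.subset_closure (Or.inr rfl)

lemma mem_orbit_iff_reach (c : Fin 3) (u w : G.V) :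
    u ∈ MulAction.orbit (G.faceGroup c) w ↔ ReflTransGen (fstep G c) w u := by
  constructor
  · rintro ⟨⟨g, hg⟩, rfl⟩
    have key : ∀ x, ReflTransGen (fstep G c) x (g x) := by
      refine Subgroup.closure_induction ?_ ?_ ?_ ?_ hg
      · rintro g' (rfl | rfl) x
        · exact ReflTransGen.single (Or.inl rfl)
        · exact ReflTransGen.single (Or.inr rfl)
      · intro x; exact ReflTransGen.refl
      · intro g₁ g₂ _ _ h1 h2 x
        exact (h2 x).trans (h1 (g₂ x))
      · intro g₁ _ h1 x
        have := h1 (g₁⁻¹ x)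
        rw [show g₁ (g₁⁻¹ x) = x from g₁.apply_symm_apply x] at this
        exact (@Relation.ReflTransGen.stdSymm _ _ ⟨fun _ _ h => fstep_symm G c h⟩).symm _ _ this
    exact key w
  · intro h
    induction h with
    | refl => exact MulAction.mem_orbit_self w
    | tail _ hstep ih =>
      obtain ⟨g, hgw⟩ := ih
      rcases hstep with rfl | rfl
      · exact ⟨⟨G.pairing, pairing_mem_faceGroup G c⟩ * g, by change _ • w = _; rw [mul_smul]; beta_reduce at hgw; rw [hgw]; rfl⟩
      · exact ⟨⟨G.colPerm c, colPerm_mem_faceGroup G c⟩ * g, by change _ • w = _; rw [mul_smul]; beta_reduce at hgw; rw [hgw]; rfl⟩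

lemma mem_orbit_full_step {x y : G.V}
    (h : y = G.pairing x ∨ ∃ c, y = G.colPerm c x) {w : G.V}
    (hx : x ∈ MulAction.orbit G.fullGroup w) : y ∈ MulAction.orbit G.fullGroup w := by
  obtain ⟨g, hgw⟩ := hx
  rcases h with rfl | ⟨c, rfl⟩
  · exact ⟨⟨G.pairing, Subgroup.subset_closure (Or.inl rfl)⟩ * g, by change _ • w = _; rw [mul_smul]; beta_reduce at hgw; rw [hgw]; rfl⟩
  · exact ⟨⟨G.colPerm c, Subgroup.subset_closure (Or.inr ⟨c, rfl⟩)⟩ * g,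
      by change _ • w = _; rw [mul_smul]; beta_reduce at hgw; rw [hgw]; rfl⟩

end Graph

end Flip15
namespace Flip15

open Relation MulAction TGraph

lemma rel_iff_reach (G : TGraph) (c : Fin 3) (x y : G.V) :
    (MulAction.orbitRel (G.faceGroup c) G.V).r x y ↔ ReflTransGen (fstep G c) x y := by
  have h0 : (MulAction.orbitRel (G.faceGroup c) G.V).r x y ↔
      x ∈ MulAction.orbit (G.faceGroup c) y := Iff.rfl
  rw [h0, mem_orbit_iff_reach]
  exact ⟨fun h => (@Relation.ReflTransGen.stdSymm _ _ ⟨fun _ _ h => fstep_symm G c h⟩).symm _ _ h,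
    fun h => (@Relation.ReflTransGen.stdSymm _ _ ⟨fun _ _ h => fstep_symm G c h⟩).symm _ _ h⟩

lemma mk_eq {B : Type} [fB : Fintype B] [dB : DecidableEq B]
    {p q : Equiv.Perm (B × Fin 4)} (hi : ∀ v, p (p v) = v) (hf : ∀ v, p v ≠ v)
    (hi' : ∀ v, q (q v) = v) (hf' : ∀ v, q v ≠ v) (h : p = q) :
    TGraph.mk B p hi hf = TGraph.mk B q hi' hf' := by subst h; rfl

lemma flip_eq_self (G : TGraph) (a b : G.V) (h : G.pairing a = b) : G.flip a b = G := by
  subst h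
  show TGraph.mk G.B _ _ _ = TGraph.mk G.B G.pairing G.invol G.fixfree
  refine mk_eq _ _ _ _ ?_
  rw [Equiv.swap_self]
  exact Equiv.ext fun x => rfl

lemma sum_lt_of_three (n n' : Fin 3 → ℕ) (c₁ c₂ : Fin 3) (hc : c₁ ≠ c₂)
    (h1 : n c₁ + 1 ≤ n' c₁) (h2 : n c₂ + 1 ≤ n' c₂) (h3 : ∀ c, n c ≤ n' c + 1) :
    ∑ c, n c < ∑ c, n' c := by
  have h30 := h3 0; have h31 := h3 1; have h32 := h3 2
  rw [Fin.sum_univ_three, Fin.sum_univ_three]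
  fin_cases c₁ <;> fin_cases c₂ <;>
    first
    | exact absurd rfl hc
    | (simp only [Fin.zero_eta, Fin.mk_one, Fin.isValue,
        show (⟨2, by omega⟩ : Fin 3) = 2 from rfl] at h1 h2 ⊢; omega)

end Flip15

open Flip15

/-- Let `G` be a connected graph with no proper face of
length 2, containing two distinct bubbles joined by the color-0 edge
`{v, pairing v}` and by a second color-0 edge in the configuration forced by
the absence of proper length-2 faces (joining vertices attached to `v` and to
`pairing v` by edges of two different colors), with the remaining four
vertices of these two bubbles connected to other bubbles by distinct color-0
edges not forming 2-edge-cuts.  Then a sequence of two flips produces a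
connected graph `G''` with the same number of bubbles and strictly more
faces; hence `G` does not maximize the number of faces. -/
theorem double_edge_not_maximal (G : TGraph) (hG : G.Connected)
    (hnpf : ∀ c x, ¬ G.ProperFace2 c x)
    (v : G.V) (hbub : (G.pairing v).1 ≠ v.1)
    (c₁ c₂ : Fin 3) (hc : c₁ ≠ c₂)
    (hsecond : G.pairing (G.colPerm c₁ v) = G.colPerm c₂ (G.pairing v))
    (hrest : ∀ x : G.V,
      (x.1 = v.1 ∨ x.1 = (G.pairing v).1) →
      x ≠ v → x ≠ G.pairing v → x ≠ G.colPerm c₁ v →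
      x ≠ G.colPerm c₂ (G.pairing v) →
      (G.pairing x).1 ≠ v.1 ∧ (G.pairing x).1 ≠ (G.pairing v).1)
    (hnocut : ∀ x y : G.V,
      (x.1 = v.1 ∨ x.1 = (G.pairing v).1) →
      (y.1 = v.1 ∨ y.1 = (G.pairing v).1) →
      y ≠ x → y ≠ G.pairing x → ¬ G.CutDisconnects x y) :
    (∃ a b a' b' : G.V,
      ((G.flip a b).flip a' b').Connected ∧
        G.F < ((G.flip a b).flip a' b').F ∧
        ((G.flip a b).flip a' b').b = G.b) ∧
      ¬ G.MaximizesFaces := by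

  classical
  set pv := G.pairing v with hpv
  set u1 := G.colPerm c₁ v with hu1
  set u2 := G.pairing u1 with hu2
  set G' := G.flip v u1 with hG'
  have hpv1 : pv.1 ≠ v.1 := hbub
  have hpvv : pv ≠ v := fun h => hpv1 (congrArg Prod.fst h)
  have hvpv : v ≠ pv := hpvv.symm
  have hu1v : u1 ≠ v := by rw [hu1]; exact colPerm_ne G c₁ v
  have hu11 : u1.1 = v.1 := by rw [hu1]; rfl
  have hc2pv : G.colPerm c₂ pv = u2 := hsecond.symm
  have hu21 : u2.1 = pv.1 := by rw [← hc2pv]; rfl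
  have hu2pv : u2 ≠ pv := by rw [← hc2pv]; exact colPerm_ne G c₂ pv
  have hpvu1 : pv ≠ u1 := fun h => hpv1 (by rw [h, hu11])
  have hu2u1 : u2 ≠ u1 := fun h => hpv1 (by rw [← hu21, h, hu11])
  have hu2v : u2 ≠ v := fun h => hpv1 (by rw [← hu21, h])
  have hppv : G.pairing pv = v := by rw [hpv]; exact G.invol v
  have hpu2 : G.pairing u2 = u1 := by rw [hu2]; exact G.invol u1
  have hc2u2 : G.colPerm c₂ u2 = pv := by rw [← hc2pv, colPerm_invol]
  have hc1u1 : G.colPerm c₁ u1 = v := by rw [hu1, colPerm_invol]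
  -- the flipped pairing
  have hp'eq : ∀ x : G.V, G'.pairing x =
      Equiv.swap pv u1 (G.pairing (Equiv.swap pv u1 x)) := fun x => rfl
  have hswapv : Equiv.swap pv u1 v = v := Equiv.swap_apply_of_ne_of_ne hvpv hu1v.symm
  have hswapu2 : Equiv.swap pv u1 u2 = u2 := Equiv.swap_apply_of_ne_of_ne hu2pv hu2u1
  have hp'v : G'.pairing v = u1 := by
    rw [hp'eq, hswapv, ← hpv, Equiv.swap_apply_left]
  have hp'u1 : G'.pairing u1 = v := by
    rw [hp'eq, Equiv.swap_apply_right, hppv, hswapv]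
  have hp'pv : G'.pairing pv = u2 := by
    rw [hp'eq, Equiv.swap_apply_left, ← hu2, hswapu2]
  have hp'u2 : G'.pairing u2 = pv := by
    rw [hp'eq, hswapu2, hpu2, Equiv.swap_apply_right]
  have hp'gen : ∀ x : G.V, x ≠ v → x ≠ pv → x ≠ u1 → x ≠ u2 →
      G'.pairing x = G.pairing x := by
    intro x h1 h2 h3 h4
    rw [hp'eq, Equiv.swap_apply_of_ne_of_ne h2 h3,
      Equiv.swap_apply_of_ne_of_ne
        (fun h => h1 (by rw [← G.invol x, h, hppv]))
        (fun h => h4 (by rw [← G.invol x, h]))]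
  have hcol : ∀ (c : Fin 3) (x : G.V), G'.colPerm c x = G.colPerm c x := fun _ _ => rfl
  -- steps of the flipped graph are paths of the original graph
  have hreachstep1 : ∀ a : G.V, Relation.ReflTransGen (fstep G c₁) a (G'.pairing a) := by
    intro a
    by_cases h1a : a = v
    · rw [h1a, hp'v]; exact Relation.ReflTransGen.single (Or.inr hu1)
    by_cases h2a : a = u1
    · rw [h2a, hp'u1]; exact Relation.ReflTransGen.single (Or.inr hc1u1.symm)
    by_cases h3a : a = pv
    · rw [h3a, hp'pv]
      have e1 : Relation.ReflTransGen (fstep G c₁) pv v :=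
        Relation.ReflTransGen.single (Or.inl hppv.symm)
      have e2 : Relation.ReflTransGen (fstep G c₁) v u1 :=
        Relation.ReflTransGen.single (Or.inr hu1)
      have e3 : Relation.ReflTransGen (fstep G c₁) u1 u2 :=
        Relation.ReflTransGen.single (Or.inl hu2)
      exact (e1.trans e2).trans e3
    by_cases h4a : a = u2
    · rw [h4a, hp'u2]
      have e1 : Relation.ReflTransGen (fstep G c₁) u2 u1 :=
        Relation.ReflTransGen.single (Or.inl hpu2.symm)
      have e2 : Relation.ReflTransGen (fstep G c₁) u1 v :=
        Relation.ReflTransGen.single (Or.inr hc1u1.symm)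
      have e3 : Relation.ReflTransGen (fstep G c₁) v pv :=
        Relation.ReflTransGen.single (Or.inl hpv)
      exact (e1.trans e2).trans e3
    · rw [hp'gen a h1a h3a h2a h4a]; exact Relation.ReflTransGen.single (Or.inl rfl)
  have hreachstep2 : ∀ a : G.V, Relation.ReflTransGen (fstep G c₂) a (G'.pairing a) := by
    intro a
    by_cases h1a : a = v
    · rw [h1a, hp'v]
      have e1 : Relation.ReflTransGen (fstep G c₂) v pv :=
        Relation.ReflTransGen.single (Or.inl hpv)
      have e2 : Relation.ReflTransGen (fstep G c₂) pv u2 :=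
        Relation.ReflTransGen.single (Or.inr hc2pv.symm)
      have e3 : Relation.ReflTransGen (fstep G c₂) u2 u1 :=
        Relation.ReflTransGen.single (Or.inl hpu2.symm)
      exact (e1.trans e2).trans e3
    by_cases h2a : a = u1
    · rw [h2a, hp'u1]
      have e1 : Relation.ReflTransGen (fstep G c₂) u1 u2 :=
        Relation.ReflTransGen.single (Or.inl hu2)
      have e2 : Relation.ReflTransGen (fstep G c₂) u2 pv :=
        Relation.ReflTransGen.single (Or.inr hc2u2.symm)
      have e3 : Relation.ReflTransGen (fstep G c₂) pv v :=
        Relation.ReflTransGen.single (Or.inl hppv.symm)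
      exact (e1.trans e2).trans e3
    by_cases h3a : a = pv
    · rw [h3a, hp'pv]; exact Relation.ReflTransGen.single (Or.inr hc2pv.symm)
    by_cases h4a : a = u2
    · rw [h4a, hp'u2]; exact Relation.ReflTransGen.single (Or.inr hc2u2.symm)
    · rw [hp'gen a h1a h3a h2a h4a]; exact Relation.ReflTransGen.single (Or.inl rfl)
  have hbridge : ∀ c : Fin 3,
      (∀ a : G.V, Relation.ReflTransGen (fstep G c) a (G'.pairing a)) →
      ∀ x y : G.V, Relation.ReflTransGen (fstep G' c) x y →
        Relation.ReflTransGen (fstep G c) x y := by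
    intro c hcstep x y h
    induction h with
    | refl => exact Relation.ReflTransGen.refl
    | tail _ hstep ih =>
      rcases hstep with rfl | rfl
      · exact ih.trans (hcstep _)
      · exact ih.tail (Or.inr (hcol c _))
  -- the new length-2 faces of colors c₁ and c₂
  have horb1 : ∀ y : G.V, Relation.ReflTransGen (fstep G' c₁) v y → y = v ∨ y = u1 := by
    intro y h
    induction h with
    | refl => exact Or.inl rfl
    | tail _ hstep ih =>
      rcases hstep with rfl | rfl
      · rcases ih with h | h
        · rw [h]; exact Or.inr hp'v
        · rw [h]; exact Or.inl hp'u1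
      · rcases ih with h | h
        · rw [h]; exact Or.inr ((hcol c₁ v).trans hu1.symm)
        · rw [h]; exact Or.inl ((hcol c₁ u1).trans hc1u1)
  have horb2 : ∀ y : G.V, Relation.ReflTransGen (fstep G' c₂) pv y → y = pv ∨ y = u2 := by
    intro y h
    induction h with
    | refl => exact Or.inl rfl
    | tail _ hstep ih =>
      rcases hstep with rfl | rfl
      · rcases ih with h | h
        · rw [h]; exact Or.inr hp'pv
        · rw [h]; exact Or.inl hp'u2
      · rcases ih with h | h
        · rw [h]; exact Or.inr ((hcol c₂ pv).trans hc2pv)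
        · rw [h]; exact Or.inl ((hcol c₂ u2).trans hc2u2)
  -- the two strict gains
  have key1 : G.numFaces c₁ + 1 ≤ G'.numFaces c₁ := by
    have hmono1 : ∀ x y : G.V, (MulAction.orbitRel (G'.faceGroup c₁) G'.V).r x y →
        (MulAction.orbitRel (G.faceGroup c₁) G.V).r x y := by
      intro x y h
      exact (rel_iff_reach G c₁ x y).mpr
        (hbridge c₁ hreachstep1 x y ((rel_iff_reach G' c₁ x y).mp h))
    have hns : ¬ (MulAction.orbitRel (G'.faceGroup c₁) G'.V).r pv v := by
      intro h
      have h2 : Relation.ReflTransGen (fstep G' c₁) v pv :=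
        (@Relation.ReflTransGen.stdSymm _ _ ⟨fun _ _ h => fstep_symm G' c₁ h⟩).symm _ _
          ((rel_iff_reach G' c₁ pv v).mp h)
      rcases horb1 pv h2 with h3 | h3
      · exact hpvv h3
      · exact hpvu1 h3
    have hyes : (MulAction.orbitRel (G.faceGroup c₁) G.V).r pv v :=
      (rel_iff_reach G c₁ pv v).mpr (Relation.ReflTransGen.single (Or.inl hppv.symm))
    exact card_quotient_succ_le hmono1 pv v hns hyes
  have key2 : G.numFaces c₂ + 1 ≤ G'.numFaces c₂ := by
    have hmono2 : ∀ x y : G.V, (MulAction.orbitRel (G'.faceGroup c₂) G'.V).r x y →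
        (MulAction.orbitRel (G.faceGroup c₂) G.V).r x y := by
      intro x y h
      exact (rel_iff_reach G c₂ x y).mpr
        (hbridge c₂ hreachstep2 x y ((rel_iff_reach G' c₂ x y).mp h))
    have hns : ¬ (MulAction.orbitRel (G'.faceGroup c₂) G'.V).r v pv := by
      intro h
      have h2 : Relation.ReflTransGen (fstep G' c₂) pv v :=
        (@Relation.ReflTransGen.stdSymm _ _ ⟨fun _ _ h => fstep_symm G' c₂ h⟩).symm _ _
          ((rel_iff_reach G' c₂ v pv).mp h)
      rcases horb2 v h2 with h3 | h3
      · exact hpvv h3.symm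
      · exact hu2v h3.symm
    have hyes : (MulAction.orbitRel (G.faceGroup c₂) G.V).r v pv :=
      (rel_iff_reach G c₂ v pv).mpr (Relation.ReflTransGen.single (Or.inl hpv))
    exact card_quotient_succ_le hmono2 v pv hns hyes
  -- every color loses at most one face
  have hall : ∀ c : Fin 3, G.numFaces c ≤ G'.numFaces c + 1 := by
    intro c
    set s : Setoid G.V := MulAction.orbitRel (G.faceGroup c) G.V with hsdef
    set s' : Setoid G.V := MulAction.orbitRel (G'.faceGroup c) G'.V with hs'def
    set rel : G.V → G.V → Prop :=
      fun a b => Relation.ReflTransGen (fstep G c) a b ∨ (a = v ∧ b = u1) with hreldef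
    set t : Setoid G.V := Relation.EqvGen.setoid rel with htdef
    have hsr : ∀ x y : G.V, s.r x y ↔ Relation.ReflTransGen (fstep G c) x y :=
      fun x y => rel_iff_reach G c x y
    have hst : ∀ x y, s.r x y → t.r x y := fun x y h =>
      Relation.EqvGen.rel x y (Or.inl ((hsr x y).mp h))
    have hnear : ∀ {a b2 : G.V}, s.r a b2 → (s.r b2 v ∨ s.r b2 u1) →
        (s.r a v ∨ s.r a u1) :=
      fun hab h => h.imp (fun h2 => Setoid.trans' s hab h2)
        (fun h2 => Setoid.trans' s hab h2)
    have ht : ∀ x y, t.r x y →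
        s.r x y ∨ ((s.r x v ∨ s.r x u1) ∧ (s.r y v ∨ s.r y u1)) := by
      intro x y h
      have h' : Relation.EqvGen rel x y := h
      clear h
      induction h' with
      | rel a b2 hab =>
        rcases hab with hab | ⟨rfl, rfl⟩
        · exact Or.inl ((hsr _ _).mpr hab)
        · exact Or.inr ⟨Or.inl (Setoid.refl' s _), Or.inr (Setoid.refl' s _)⟩
      | refl a => exact Or.inl (Setoid.refl' s a)
      | symm a b2 _ ih =>
        rcases ih with h | ⟨h1, h2⟩
        · exact Or.inl (Setoid.symm' s h)
        · exact Or.inr ⟨h2, h1⟩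
      | trans a b2 c2 _ _ ih1 ih2 =>
        rcases ih1 with h1 | ⟨h1a, h1b⟩
        · rcases ih2 with h2 | ⟨h2a, h2b⟩
          · exact Or.inl (Setoid.trans' s h1 h2)
          · exact Or.inr ⟨hnear h1 h2a, h2b⟩
        · rcases ih2 with h2 | ⟨h2a, h2b⟩
          · exact Or.inr ⟨h1a, hnear (Setoid.symm' s h2) h1b⟩
          · exact Or.inr ⟨h1a, h2b⟩
    have h1 : Nat.card (Quotient s) ≤ Nat.card (Quotient t) + 1 :=
      card_quotient_le_succ v u1 hst ht
    have hstep' : ∀ a b2 : G.V, fstep G' c a b2 → Relation.EqvGen rel a b2 := by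
      rintro a b2 (rfl | rfl)
      · by_cases h1a : a = v
        · rw [h1a, hp'v]; exact Relation.EqvGen.rel _ _ (Or.inr ⟨rfl, rfl⟩)
        · by_cases h2a : a = u1
          · rw [h2a, hp'u1]
            exact Relation.EqvGen.symm _ _ (Relation.EqvGen.rel _ _ (Or.inr ⟨rfl, rfl⟩))
          · by_cases h3a : a = pv
            · rw [h3a, hp'pv]
              have e1 : Relation.EqvGen rel pv v :=
                Relation.EqvGen.rel pv v
                  (Or.inl (Relation.ReflTransGen.single (Or.inl hppv.symm)))
              have e2 : Relation.EqvGen rel v u1 :=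
                Relation.EqvGen.rel v u1 (Or.inr ⟨rfl, rfl⟩)
              have e3 : Relation.EqvGen rel u1 u2 :=
                Relation.EqvGen.rel u1 u2
                  (Or.inl (Relation.ReflTransGen.single (Or.inl hu2)))
              exact Relation.EqvGen.trans _ _ _ e1 (Relation.EqvGen.trans _ _ _ e2 e3)
            · by_cases h4a : a = u2
              · rw [h4a, hp'u2]
                have e1 : Relation.EqvGen rel pv v :=
                  Relation.EqvGen.rel pv v
                    (Or.inl (Relation.ReflTransGen.single (Or.inl hppv.symm)))
                have e2 : Relation.EqvGen rel v u1 :=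
                  Relation.EqvGen.rel v u1 (Or.inr ⟨rfl, rfl⟩)
                have e3 : Relation.EqvGen rel u1 u2 :=
                  Relation.EqvGen.rel u1 u2
                    (Or.inl (Relation.ReflTransGen.single (Or.inl hu2)))
                exact Relation.EqvGen.symm _ _
                  (Relation.EqvGen.trans _ _ _ e1 (Relation.EqvGen.trans _ _ _ e2 e3))
              · rw [hp'gen a h1a h3a h2a h4a]
                exact Relation.EqvGen.rel _ _
                  (Or.inl (Relation.ReflTransGen.single (Or.inl rfl)))
      · exact Relation.EqvGen.rel _ _
          (Or.inl (Relation.ReflTransGen.single (Or.inr (hcol c a))))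
    have hs't : ∀ x y, s'.r x y → t.r x y := by
      intro x y h
      have hr : Relation.ReflTransGen (fstep G' c) x y := (rel_iff_reach G' c x y).mp h
      clear h
      induction hr with
      | refl => exact Relation.EqvGen.refl _
      | tail _ hstep ih => exact Relation.EqvGen.trans _ _ _ ih (hstep' _ _ hstep)
    have h2 : Nat.card (Quotient t) ≤ Nat.card (Quotient s') := card_quotient_le hs't
    have hnum : G.numFaces c = Nat.card (Quotient s) := rfl
    have hnum' : G'.numFaces c = Nat.card (Quotient s') := rfl
    omega
  have hFlt : G.F < G'.F := by
    have := sum_lt_of_three (G.numFaces) (G'.numFaces) c₁ c₂ hc key1 key2 hall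
    exact this
  -- connectivity of the flipped graph
  have hcut : ¬ G.CutDisconnects v u1 := by
    refine hnocut v u1 (Or.inl rfl) (Or.inl hu11) hu1v ?_
    rw [← hpv]; exact hpvu1.symm
  have hreachAll : ∀ x y : G.V,
      G.reachAvoiding {v, G.pairing v, u1, G.pairing u1} x y := not_not.mp hcut
  have hconn : G'.Connected := by
    intro a b
    have h := hreachAll b a
    induction h with
    | refl => exact MulAction.mem_orbit_self _
    | tail _ hstep ih =>
      refine mem_orbit_full_step G' ?_ ih
      rcases hstep with ⟨c, rfl⟩ | ⟨rfl, hx, _⟩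
      · exact Or.inr ⟨c, rfl⟩
      · left
        change ¬ (_ = v ∨ _ = G.pairing v ∨ _ = u1 ∨ _ = G.pairing u1) at hx
        simp only [not_or] at hx
        exact (hp'gen _ hx.1 (by rw [hpv]; exact hx.2.1) hx.2.2.1
          (by rw [hu2]; exact hx.2.2.2)).symm
  have hb : G'.b = G.b := rfl
  have hGG : (G.flip v u1).flip v u1 = G.flip v u1 := flip_eq_self G' v u1 hp'v
  refine ⟨⟨v, u1, v, u1, ?_, ?_, ?_⟩, ?_⟩
  · exact cast (congrArg TGraph.Connected hGG).symm hconn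
  · rw [congrArg TGraph.F hGG]; exact hFlt
  · rw [congrArg TGraph.b hGG]; exact hb
  · rintro ⟨-, hmax⟩
    have := hmax G' hconn hb
    omega
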